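/- Let F be the free loop on one generator. The abelian group γ2 F / γ3 F is not finitely generated. -/
import Mathlib


/-- A loop: a quasigroup with a two-sided identity. -/
class Loop (α : Type*) extends Mul α, One α where
  ldiv : α → α → α
  rdiv : α → α → α
  one_mul : ∀ a : α, 1 * a = a
  mul_one : ∀ a : α, a * 1 = a
  mul_ldiv : ∀ a b : α, a * ldiv a b = b
  ldiv_mul : ∀ a b : α, ldiv a (a * b) = b
  rdiv_mul : ∀ a b : α, rdiv a b * b = a
  mul_rdiv : ∀ a b : α, rdiv (a * b) b = a

namespace Loop

variable {α : Type*} [Loop α]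

/-- The commutator `[a,b] = (ba)\(ab)`. -/
def comm (a b : α) : α := ldiv (b * a) (a * b)

/-- The associator `(a,b,c) = (a(bc))\((ab)c)`. -/
def assoc (a b c : α) : α := ldiv (a * (b * c)) ((a * b) * c)

/-- The associator deviation indexed by a list of indices `αs = [α_n, ..., α_1]`
(stored with the *last* index first) applied to a list of arguments.
Level `0` (empty index list) is the associator. -/
def dev : List ℕ → List α → α
  | [], [a, b, c] => assoc a b c
  | (k :: rest), args =>
      let A : α → α := fun x => dev rest (args.take (k - 1) ++ x :: args.drop (k + 1))
      ldiv (A (args.getD (k - 1) 1) * A (args.getD k 1))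
        (A (args.getD (k - 1) 1 * args.getD k 1))
  | _, _ => 1

/-- A subset is a subloop if it contains `1` and is closed under
multiplication and both divisions. -/
def IsSubloop (S : Set α) : Prop :=
  (1 : α) ∈ S ∧ ∀ a ∈ S, ∀ b ∈ S, a * b ∈ S ∧ ldiv a b ∈ S ∧ rdiv a b ∈ S

/-- A subloop is normal if `xN = Nx`, `(Nx)y = N(xy)` and `y(xN) = (yx)N`. -/
def IsNormal (S : Set α) : Prop :=
  IsSubloop S ∧
  (∀ x : α, {z | ∃ n ∈ S, z = x * n} = {z | ∃ n ∈ S, z = n * x}) ∧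
  (∀ x y : α, {z | ∃ n ∈ S, z = (n * x) * y} = {z | ∃ n ∈ S, z = n * (x * y)}) ∧
  (∀ x y : α, {z | ∃ n ∈ S, z = y * (x * n)} = {z | ∃ n ∈ S, z = (y * x) * n})

/-- `N/M` is central in `L/M`: all commutators and associators involving an
element of `N` lie in `M`. -/
def CentralMod (N M : Set α) : Prop :=
  ∀ n ∈ N, ∀ x y : α,
    comm n x ∈ M ∧ comm x n ∈ M ∧
    assoc n x y ∈ M ∧ assoc x n y ∈ M ∧ assoc x y n ∈ M

/-- `[N,L]`: the smallest normal subloop `M` such that `N/M` is central in `L/M`. -/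
def bracket (N : Set α) : Set α := ⋂₀ {M | IsNormal M ∧ CentralMod N M}

end Loop

/-- The lower central series of a loop: `γ 1 = L`, `γ (i+1) = [γ i, L]`. -/
def Loop.gamma (α : Type*) [Loop α] : ℕ → Set α
  | 0 => Set.univ
  | 1 => Set.univ
  | (n + 2) => Loop.bracket (Loop.gamma α (n + 1))

namespace Loop

variable {α : Type*} [Loop α]

/-- A family `M i` of normal subloops is admissible for the
commutator-associator filtration. -/
def Admissible (M : ℕ → Set α) : Prop :=
  (∀ i, IsNormal (M i)) ∧ M 1 = Set.univ ∧
  (∀ i p q, 1 ≤ p → 1 ≤ q → i ≤ p + q →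
    ∀ a ∈ M p, ∀ b ∈ M q, comm a b ∈ M i) ∧
  (∀ i p q r, 1 ≤ p → 1 ≤ q → 1 ≤ r → i ≤ p + q + r →
    ∀ a ∈ M p, ∀ b ∈ M q, ∀ c ∈ M r, assoc a b c ∈ M i) ∧
  (∀ (i : ℕ) (idx ps : List ℕ) (xs : List α), idx ≠ [] →
    ps.length = idx.length + 3 → xs.length = idx.length + 3 →
    (∀ j < idx.length, 1 ≤ idx.getD j 0 ∧ idx.getD j 0 ≤ (idx.length - j) + 2) →
    (∀ j < ps.length, 1 ≤ ps.getD j 0 ∧ xs.getD j 1 ∈ M (ps.getD j 0)) →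
    i ≤ ps.sum → dev idx xs ∈ M i)

/-- The commutator-associator filtration: the smallest admissible family. -/
def casub (α : Type*) [Loop α] (i : ℕ) : Set α :=
  ⋂₀ {S | ∃ M : ℕ → Set α, Admissible M ∧ S = M i}

/-- Congruence modulo a (normal) subloop: `x ≡ y mod N` iff `x ∈ yN`. -/
def ModEq (N : Set α) (x y : α) : Prop := ∃ n ∈ N, x = y * n

/-- Loop homomorphisms: maps preserving multiplication. -/
def IsLoopHom {β : Type*} [Loop β] (φ : α → β) : Prop :=
  ∀ a b : α, φ (a * b) = φ a * φ b

/-- The subloop generated by a subset. -/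
def closure (S : Set α) : Set α := ⋂₀ {T | IsSubloop T ∧ S ⊆ T}

/-- Left-normed powers: `ypow y m = ((...(yy)y)...)y`. -/
def ypow (y : α) : ℕ → α
  | 0 => 1
  | (m + 1) => ypow y m * y

end Loop

section Higman

variable {L B : Type*} [Loop L] [AddCommGroup B]

/-- Multiplication in Higman's loop `(L, B)`. -/
def hmul (f : L → L → B) (x y : L × B) : L × B :=
  (x.1 * y.1, x.2 + y.2 + f x.1 y.1)

/-- Left division in Higman's loop: `(l2,b2)\(l1,b1) = (l2\l1, b1-b2-f(l2, l2\l1))`. -/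
def hldiv (f : L → L → B) (x y : L × B) : L × B :=
  (Loop.ldiv x.1 y.1, y.2 - x.2 - f x.1 (Loop.ldiv x.1 y.1))

/-- Right division in Higman's loop: `(l1,b1)/(l2,b2) = (l1/l2, b1-b2-f(l1/l2, l2))`. -/
def hrdiv (f : L → L → B) (x y : L × B) : L × B :=
  (Loop.rdiv x.1 y.1, x.2 - y.2 - f (Loop.rdiv x.1 y.1) y.1)

/-- The commutator in Higman's loop. -/
def hcomm (f : L → L → B) (x y : L × B) : L × B :=
  hldiv f (hmul f y x) (hmul f x y)

/-- The associator in Higman's loop. -/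
def hassoc (f : L → L → B) (x y z : L × B) : L × B :=
  hldiv f (hmul f x (hmul f y z)) (hmul f (hmul f x y) z)

end Higman

section AuxLemmas

namespace Loop

variable {α : Type*} [Loop α]

lemma mul_left_cancel' {a b c : α} (h : a * b = a * c) : b = c := by
  rw [← ldiv_mul a b, h, ldiv_mul]

lemma mul_right_cancel' {a b c : α} (h : a * c = b * c) : a = b := by
  rw [← mul_rdiv a c, h, mul_rdiv]

@[simp] lemma ldiv_self (a : α) : ldiv a a = 1 :=
  mul_left_cancel' (a := a) (by rw [mul_ldiv, mul_one])

@[simp] lemma rdiv_self (a : α) : rdiv a a = 1 :=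
  mul_right_cancel' (c := a) (by rw [rdiv_mul, one_mul])

variable {β : Type*} [Loop β] {φ : α → β}

lemma hom_one (hφ : IsLoopHom φ) : φ 1 = 1 := by
  apply mul_left_cancel' (a := φ 1)
  rw [← hφ, mul_one, mul_one]

lemma hom_ldiv (hφ : IsLoopHom φ) (a b : α) : φ (ldiv a b) = ldiv (φ a) (φ b) := by
  apply mul_left_cancel' (a := φ a)
  rw [← hφ, mul_ldiv, mul_ldiv]

lemma hom_rdiv (hφ : IsLoopHom φ) (a b : α) : φ (rdiv a b) = rdiv (φ a) (φ b) := by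
  apply mul_right_cancel' (c := φ b)
  rw [← hφ, rdiv_mul, rdiv_mul]

lemma hom_comm (hφ : IsLoopHom φ) (a b : α) : φ (comm a b) = comm (φ a) (φ b) := by
  rw [comm, comm, hom_ldiv hφ, hφ, hφ]

lemma hom_assoc (hφ : IsLoopHom φ) (a b c : α) :
    φ (assoc a b c) = assoc (φ a) (φ b) (φ c) := by
  rw [assoc, assoc, hom_ldiv hφ, hφ, hφ, hφ, hφ]

lemma ker_isNormal (hφ : IsLoopHom φ) : IsNormal {a : α | φ a = 1} := by
  have hφm : ∀ a b : α, φ (a * b) = φ a * φ b := hφ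
  refine ⟨⟨hom_one hφ, ?_⟩, ?_, ?_, ?_⟩
  · intro a ha b hb
    replace ha : φ a = 1 := ha
    replace hb : φ b = 1 := hb
    refine ⟨?_, ?_, ?_⟩
    · show φ (a * b) = 1
      simp [hφm, ha, hb, Loop.mul_one]
    · show φ (ldiv a b) = 1
      simp [hom_ldiv hφ, ha, hb]
    · show φ (rdiv a b) = 1
      simp [hom_rdiv hφ, ha, hb]
  · intro x
    ext z; simp only [Set.mem_setOf_eq]
    constructor
    · rintro ⟨n, hn, rfl⟩
      refine ⟨rdiv (x * n) x, ?_, (rdiv_mul _ _).symm⟩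
      show φ _ = 1
      simp [hom_rdiv hφ, hφm, hn, Loop.mul_one]
    · rintro ⟨n, hn, rfl⟩
      refine ⟨ldiv x (n * x), ?_, (mul_ldiv _ _).symm⟩
      show φ _ = 1
      simp [hom_ldiv hφ, hφm, hn, Loop.one_mul]
  · intro x y
    ext z; simp only [Set.mem_setOf_eq]
    constructor
    · rintro ⟨n, hn, rfl⟩
      refine ⟨rdiv ((n * x) * y) (x * y), ?_, (rdiv_mul _ _).symm⟩
      show φ _ = 1
      simp [hom_rdiv hφ, hφm, hn, Loop.one_mul]
    · rintro ⟨n, hn, rfl⟩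
      refine ⟨rdiv (rdiv (n * (x * y)) y) x, ?_, ?_⟩
      · show φ _ = 1
        simp [hom_rdiv hφ, hφm, hn, Loop.one_mul, Loop.mul_rdiv]
      · rw [rdiv_mul, rdiv_mul]
  · intro x y
    ext z; simp only [Set.mem_setOf_eq]
    constructor
    · rintro ⟨n, hn, rfl⟩
      refine ⟨ldiv (y * x) (y * (x * n)), ?_, (mul_ldiv _ _).symm⟩
      show φ _ = 1
      simp [hom_ldiv hφ, hφm, hn, Loop.mul_one]
    · rintro ⟨n, hn, rfl⟩
      refine ⟨ldiv x (ldiv y ((y * x) * n)), ?_, ?_⟩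
      · show φ _ = 1
        simp [hom_ldiv hφ, hφm, hn, Loop.mul_one, Loop.ldiv_mul]
      · rw [mul_ldiv, mul_ldiv]

lemma preimage_isSubloop (hφ : IsLoopHom φ) {U : Set β} (hU : IsSubloop U) :
    IsSubloop (φ ⁻¹' U) := by
  obtain ⟨h1, hcl⟩ := hU
  refine ⟨?_, ?_⟩
  · show φ 1 ∈ U
    rw [hom_one hφ]; exact h1
  · intro a ha b hb
    obtain ⟨hm, hl, hr⟩ := hcl (φ a) ha (φ b) hb
    refine ⟨?_, ?_, ?_⟩
    · show φ (a * b) ∈ U; rw [hφ]; exact hm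
    · show φ (ldiv a b) ∈ U; rw [hom_ldiv hφ]; exact hl
    · show φ (rdiv a b) ∈ U; rw [hom_rdiv hφ]; exact hr

lemma bracket_subset_of {N M : Set α} (h1 : IsNormal M) (h2 : CentralMod N M) :
    bracket N ⊆ M :=
  Set.sInter_subset_of_mem ⟨h1, h2⟩

lemma closure_subset_of {S T : Set α} (h1 : IsSubloop T) (h2 : S ⊆ T) :
    closure S ⊆ T :=
  Set.sInter_subset_of_mem ⟨h1, h2⟩

lemma gamma_two_eq (α : Type*) [Loop α] :
    gamma α 2 = Loop.bracket (Set.univ : Set α) := rfl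

lemma gamma_three_eq (α : Type*) [Loop α] :
    gamma α 3 = Loop.bracket (gamma α 2) := rfl

lemma comm_mem_gamma_two (a b : α) : comm a b ∈ gamma α 2 := by
  rw [gamma_two_eq]
  intro M hM
  exact (hM.2 a trivial b b).1

end Loop

/-- A wrapper around `ℤ`, viewed as a loop. -/
structure Zi : Type where
  z : ℤ

instance : Loop Zi where
  mul a b := ⟨a.z + b.z⟩
  one := ⟨0⟩
  ldiv a b := ⟨b.z - a.z⟩
  rdiv a b := ⟨a.z - b.z⟩
  one_mul a := by
    cases a with | mk az => exact congrArg Zi.mk (show 0 + az = az by ring)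
  mul_one a := by
    cases a with | mk az => exact congrArg Zi.mk (show az + 0 = az by ring)
  mul_ldiv a b := by
    cases a with | mk az => cases b with
      | mk bz => exact congrArg Zi.mk (show az + (bz - az) = bz by ring)
  ldiv_mul a b := by
    cases a with | mk az => cases b with
      | mk bz => exact congrArg Zi.mk (show (az + bz) - az = bz by ring)
  rdiv_mul a b := by
    cases a with | mk az => cases b with
      | mk bz => exact congrArg Zi.mk (show (az - bz) + bz = az by ring)
  mul_rdiv a b := by
    cases a with | mk az => cases b with
      | mk bz => exact congrArg Zi.mk (show (az + bz) - bz = az by ring)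

@[simp] lemma Zi.mul_def (a b : Zi) : a * b = ⟨a.z + b.z⟩ := rfl
@[simp] lemma Zi.one_def : (1 : Zi) = ⟨0⟩ := rfl
@[simp] lemma Zi.ldiv_def (a b : Zi) : Loop.ldiv a b = ⟨b.z - a.z⟩ := rfl
@[simp] lemma Zi.rdiv_def (a b : Zi) : Loop.rdiv a b = ⟨a.z - b.z⟩ := rfl
@[simp] lemma Zi.eta (a : Zi) : Zi.mk a.z = a := rfl

lemma Zi.comm_eq_one (a b : Zi) : Loop.comm a b = 1 := by
  simp only [Loop.comm, Zi.mul_def, Zi.ldiv_def, Zi.one_def, Zi.mk.injEq]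
  ring

lemma Zi.assoc_eq_one (a b c : Zi) : Loop.assoc a b c = 1 := by
  simp only [Loop.assoc, Zi.mul_def, Zi.ldiv_def, Zi.one_def, Zi.mk.injEq]
  ring

/-- Higman's cocycle. -/
noncomputable def fB (a b : Zi) : ℕ →₀ ℤ :=
  if b.z = 1 ∧ 2 ≤ a.z then Finsupp.single a.z.toNat 1 else 0

lemma fB_right_ne {a b : Zi} (h : b.z ≠ 1) : fB a b = 0 :=
  if_neg (fun hc => h hc.1)

lemma fB_left_small {a b : Zi} (h : a.z < 2) : fB a b = 0 :=
  if_neg (fun hc => absurd hc.2 (not_le.mpr h))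

@[simp] lemma fB_right_one (a : Zi) : fB a 1 = 0 :=
  fB_right_ne (by simp)

@[simp] lemma fB_one_left (b : Zi) : fB 1 b = 0 :=
  fB_left_small (by simp)

@[simp] lemma fB_zero_right (a : Zi) : fB a ⟨0⟩ = 0 :=
  fB_right_ne (by simp)

@[simp] lemma fB_zero_left (b : Zi) : fB ⟨0⟩ b = 0 :=
  fB_left_small (by simp)

/-- Higman's loop over `ℤ` with values in `ℕ →₀ ℤ`. -/
abbrev HB : Type := Zi × (ℕ →₀ ℤ)

noncomputable instance : Loop HB where
  mul := hmul fB
  one := (1, 0)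
  ldiv := hldiv fB
  rdiv := hrdiv fB
  one_mul x := by
    obtain ⟨x1, x2⟩ := x
    show ((1 : Zi) * x1, 0 + x2 + fB 1 x1) = (x1, x2)
    rw [Loop.one_mul, fB_one_left, add_zero, zero_add]
  mul_one x := by
    obtain ⟨x1, x2⟩ := x
    show (x1 * 1, x2 + 0 + fB x1 1) = (x1, x2)
    rw [Loop.mul_one, fB_right_one, add_zero, add_zero]
  mul_ldiv a b := by
    obtain ⟨a1, a2⟩ := a; obtain ⟨b1, b2⟩ := b
    show (a1 * Loop.ldiv a1 b1,
      a2 + (b2 - a2 - fB a1 (Loop.ldiv a1 b1)) + fB a1 (Loop.ldiv a1 b1)) = (b1, b2)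
    rw [Loop.mul_ldiv]
    simp only [Prod.mk.injEq, true_and]
    abel
  ldiv_mul a b := by
    obtain ⟨a1, a2⟩ := a; obtain ⟨b1, b2⟩ := b
    show (Loop.ldiv a1 (a1 * b1),
      (a2 + b2 + fB a1 b1) - a2 - fB a1 (Loop.ldiv a1 (a1 * b1))) = (b1, b2)
    rw [Loop.ldiv_mul]
    simp only [Prod.mk.injEq, true_and]
    abel
  rdiv_mul a b := by
    obtain ⟨a1, a2⟩ := a; obtain ⟨b1, b2⟩ := b
    show (Loop.rdiv a1 b1 * b1,
      (a2 - b2 - fB (Loop.rdiv a1 b1) b1) + b2 + fB (Loop.rdiv a1 b1) b1) = (a1, a2)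
    rw [Loop.rdiv_mul]
    simp only [Prod.mk.injEq, true_and]
    abel
  mul_rdiv a b := by
    obtain ⟨a1, a2⟩ := a; obtain ⟨b1, b2⟩ := b
    show (Loop.rdiv (a1 * b1) b1,
      (a2 + b2 + fB a1 b1) - b2 - fB (Loop.rdiv (a1 * b1) b1) b1) = (a1, a2)
    rw [Loop.mul_rdiv]
    simp only [Prod.mk.injEq, true_and]
    abel

@[simp] lemma HB.one_def : (1 : HB) = ((1 : Zi), (0 : ℕ →₀ ℤ)) := rfl
@[simp] lemma HB.ldiv_def (x y : HB) : Loop.ldiv x y = hldiv fB x y := rfl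

lemma HB.comm_eq (x y : HB) :
    Loop.comm x y = (1, fB x.1 y.1 - fB y.1 x.1) := by
  obtain ⟨x1, x2⟩ := x; obtain ⟨y1, y2⟩ := y
  have h0 : Loop.ldiv (y1 * x1) (x1 * y1) = (1 : Zi) := by
    simp; ring
  show hldiv fB (hmul fB (y1, y2) (x1, x2)) (hmul fB (x1, x2) (y1, y2)) = _
  rw [hmul, hmul, hldiv]
  simp only at h0 ⊢
  rw [h0, fB_right_one]
  simp only [Prod.mk.injEq, true_and]
  abel

lemma HB.assoc_eq (x y z : HB) :
    Loop.assoc x y z =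
      (1, fB x.1 y.1 + fB (x.1 * y.1) z.1 - fB y.1 z.1 - fB x.1 (y.1 * z.1)) := by
  obtain ⟨x1, x2⟩ := x; obtain ⟨y1, y2⟩ := y; obtain ⟨z1, z2⟩ := z
  have h0 : Loop.ldiv (x1 * (y1 * z1)) ((x1 * y1) * z1) = (1 : Zi) := by
    simp; ring
  show hldiv fB (hmul fB (x1, x2) (hmul fB (y1, y2) (z1, z2)))
      (hmul fB (hmul fB (x1, x2) (y1, y2)) (z1, z2)) = _
  rw [hmul, hmul, hmul, hmul, hldiv]
  simp only at h0 ⊢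
  rw [h0, fB_right_one]
  simp only [Prod.mk.injEq, true_and]
  abel

lemma HB.central {n : HB} (hn : n.1 = 1) (x y : HB) :
    Loop.comm n x = 1 ∧ Loop.comm x n = 1 ∧ Loop.assoc n x y = 1 ∧
      Loop.assoc x n y = 1 ∧ Loop.assoc x y n = 1 := by
  refine ⟨?_, ?_, ?_, ?_, ?_⟩
  · rw [HB.comm_eq, hn]; simp
  · rw [HB.comm_eq, hn]; simp
  · rw [HB.assoc_eq, hn]; simp [Loop.one_mul]
  · rw [HB.assoc_eq, hn]; simp [Loop.one_mul, Loop.mul_one]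
  · rw [HB.assoc_eq, hn]; simp [Loop.mul_one]

universe v

instance instLoopULift {γ : Type} [Loop γ] : Loop (ULift.{v} γ) where
  mul a b := ⟨a.down * b.down⟩
  one := ⟨1⟩
  ldiv a b := ⟨Loop.ldiv a.down b.down⟩
  rdiv a b := ⟨Loop.rdiv a.down b.down⟩
  one_mul a := congrArg ULift.up (Loop.one_mul a.down)
  mul_one a := congrArg ULift.up (Loop.mul_one a.down)
  mul_ldiv a b := congrArg ULift.up (Loop.mul_ldiv a.down b.down)
  ldiv_mul a b := congrArg ULift.up (Loop.ldiv_mul a.down b.down)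
  rdiv_mul a b := congrArg ULift.up (Loop.rdiv_mul a.down b.down)
  mul_rdiv a b := congrArg ULift.up (Loop.mul_rdiv a.down b.down)

end AuxLemmas

universe u

/-- for `F` the free loop on one generator `y`, the abelian
group `γ₂F/γ₃F` is not finitely generated: there is no finite subset `S` of
`γ₂ F` such that `γ₂ F` is contained in the subloop generated by `S` together
with `γ₃ F`. -/
theorem gamma2_mod_gamma3_not_fg {F : Type u} [Loop F] (y : F)
    (hfree : ∀ (M : Type u) [Loop M] (m : M),
      ∃! φ : F → M, Loop.IsLoopHom φ ∧ φ y = m) :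
    ¬ ∃ S : Finset F, (S : Set F) ⊆ Loop.gamma F 2 ∧
        Loop.gamma F 2 ⊆ Loop.closure ((S : Set F) ∪ Loop.gamma F 3) := by
  classical
  rintro ⟨S, hS2, hSgen⟩
  obtain ⟨φ₀, ⟨hφ₀, hy₀⟩, -⟩ := hfree (ULift.{u} HB) ⟨((⟨1⟩ : Zi), 0)⟩
  set φ : F → HB := fun a => (φ₀ a).down with hφdef
  have hφ : Loop.IsLoopHom φ := fun a b => congrArg ULift.down (hφ₀ a b)
  have hφy : φ y = ((⟨1⟩ : Zi), 0) := congrArg ULift.down hy₀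
  -- the first-component homomorphism
  have hφm : ∀ a b : F, φ (a * b) = hmul fB (φ a) (φ b) := hφ
  have hψ : Loop.IsLoopHom (fun a => (φ a).1) := fun a b =>
    congrArg Prod.fst (hφ a b)
  -- γ₂ F is contained in the kernel of the first component
  have hker2 : Loop.gamma F 2 ⊆ {a : F | (φ a).1 = 1} := by
    rw [Loop.gamma_two_eq]
    apply Loop.bracket_subset_of (Loop.ker_isNormal hψ)
    intro n _ x w
    exact ⟨(Loop.hom_comm hψ n x).trans (Zi.comm_eq_one _ _),
      (Loop.hom_comm hψ x n).trans (Zi.comm_eq_one _ _),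
      (Loop.hom_assoc hψ n x w).trans (Zi.assoc_eq_one _ _ _),
      (Loop.hom_assoc hψ x n w).trans (Zi.assoc_eq_one _ _ _),
      (Loop.hom_assoc hψ x w n).trans (Zi.assoc_eq_one _ _ _)⟩
  -- γ₃ F is contained in the kernel of φ
  have hker3 : Loop.gamma F 3 ⊆ {a : F | φ a = 1} := by
    rw [Loop.gamma_three_eq]
    apply Loop.bracket_subset_of (Loop.ker_isNormal hφ)
    intro n hn x w
    obtain ⟨c1, c2, c3, c4, c5⟩ := HB.central (hker2 hn) (φ x) (φ w)
    exact ⟨(Loop.hom_comm hφ n x).trans c1, (Loop.hom_comm hφ x n).trans c2,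
      (Loop.hom_assoc hφ n x w).trans c3, (Loop.hom_assoc hφ x n w).trans c4,
      (Loop.hom_assoc hφ x w n).trans c5⟩
  -- the finitely generated subgroup of B
  set G : AddSubgroup (ℕ →₀ ℤ) := AddSubgroup.closure ((fun s => (φ s).2) '' ↑S)
    with hGdef
  set U : Set HB := {x : HB | x.1 = 1 ∧ x.2 ∈ G} with hUdef
  have hU : Loop.IsSubloop U := by
    constructor
    · exact ⟨rfl, zero_mem G⟩
    · rintro a ⟨ha1, ha2⟩ b ⟨hb1, hb2⟩
      obtain ⟨a1, a2⟩ := a; obtain ⟨b1, b2⟩ := b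
      simp only at ha1 hb1
      subst ha1; subst hb1
      refine ⟨⟨?_, ?_⟩, ⟨?_, ?_⟩, ⟨?_, ?_⟩⟩
      · show (1 : Zi) * 1 = 1; simp
      · show a2 + b2 + fB 1 1 ∈ G
        rw [fB_one_left, add_zero]; exact add_mem ha2 hb2
      · show Loop.ldiv (1 : Zi) 1 = 1; simp
      · show b2 - a2 - fB 1 (Loop.ldiv (1 : Zi) 1) ∈ G
        rw [fB_one_left]; exact sub_mem (sub_mem hb2 ha2) (zero_mem G)
      · show Loop.rdiv (1 : Zi) 1 = 1; simp
      · show a2 - b2 - fB (Loop.rdiv (1 : Zi) 1) 1 ∈ G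
        rw [fB_right_one]; exact sub_mem (sub_mem ha2 hb2) (zero_mem G)
  have hsub : Loop.closure ((S : Set F) ∪ Loop.gamma F 3) ⊆ φ ⁻¹' U := by
    apply Loop.closure_subset_of (Loop.preimage_isSubloop hφ hU)
    rintro a (ha | ha)
    · exact ⟨hker2 (hS2 ha), AddSubgroup.subset_closure ⟨a, ha, rfl⟩⟩
    · have h1 : φ a = 1 := hker3 ha
      show φ a ∈ U
      rw [h1]
      exact ⟨rfl, zero_mem G⟩
  -- the first component of powers of y
  have hyp : ∀ m : ℕ, (φ (Loop.ypow y m)).1 = ⟨(m : ℤ)⟩ := by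
    intro m
    induction m with
    | zero =>
      show (φ 1).1 = _
      rw [Loop.hom_one hφ]
      simp
    | succ k ih =>
      show (φ (Loop.ypow y k * y)).1 = _
      rw [hφm]
      show (φ (Loop.ypow y k)).1 * (φ y).1 = _
      rw [ih, hφy]
      show (⟨(k : ℤ)⟩ : Zi) * ⟨1⟩ = _
      rw [Zi.mul_def]
      push_cast
      rfl
  -- each single (m) 1 with m ≥ 2 lies in G
  have hcm : ∀ m : ℕ, 2 ≤ m → Finsupp.single m (1 : ℤ) ∈ G := by
    intro m hm
    have h1 : Loop.comm (Loop.ypow y m) y ∈ Loop.gamma F 2 :=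
      Loop.comm_mem_gamma_two _ _
    have h2 := hsub (hSgen h1)
    have h3 : φ (Loop.comm (Loop.ypow y m) y) = (1, Finsupp.single m (1 : ℤ)) := by
      rw [Loop.hom_comm hφ, HB.comm_eq, hyp m, hφy]
      have e1 : fB ⟨(m : ℤ)⟩ ((⟨1⟩ : Zi), (0 : ℕ →₀ ℤ)).1 = Finsupp.single m 1 := by
        show fB ⟨(m : ℤ)⟩ ⟨1⟩ = _
        rw [fB, if_pos ⟨rfl, show (2:ℤ) ≤ (m:ℤ) by exact_mod_cast hm⟩]
        simp
      have e2 : fB ((⟨1⟩ : Zi), (0 : ℕ →₀ ℤ)).1 (⟨(m : ℤ)⟩ : Zi) = 0 := by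
        show fB ⟨1⟩ ⟨(m : ℤ)⟩ = 0
        exact fB_left_small (by norm_num)
      rw [e1, e2, sub_zero]
    rw [Set.mem_preimage, h3] at h2
    exact h2.2
  -- derive a contradiction: G is finitely generated but contains all singles
  set V : Finset (ℕ →₀ ℤ) := S.image (fun s => (φ s).2) with hVdef
  set N : ℕ := (V.sup fun b => b.support.sup id) + 2 with hNdef
  have hNG : Finsupp.single N (1 : ℤ) ∈ G := hcm N (by omega)
  have hGP : G ≤ AddMonoidHom.ker (Finsupp.applyAddHom (M := ℤ) N) := by
    rw [hGdef]
    rw [AddSubgroup.closure_le]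
    rintro b ⟨s, hs, rfl⟩
    show ((φ s).2) N = 0
    by_contra hne
    have hmem : N ∈ ((φ s).2).support := Finsupp.mem_support_iff.2 hne
    have h4 : N ≤ ((φ s).2).support.sup id := Finset.le_sup (f := id) hmem
    have hmemV : (φ s).2 ∈ V := by
      rw [hVdef]; exact Finset.mem_image_of_mem _ hs
    have h5 : ((φ s).2).support.sup id ≤ V.sup fun b => b.support.sup id :=
      Finset.le_sup (f := fun b : ℕ →₀ ℤ => b.support.sup id) hmemV
    omega
  have := hGP hNG
  rw [AddMonoidHom.mem_ker] at this
  simp [Finsupp.applyAddHom] at this
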